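/- There is no directed path in the pair-digraph H+ joining a vertex of one non-trivial strongly connected component to a vertex of a different non-trivial strongly connected component. -/
import Mathlib


variable {V : Type*}

/-- Arc of the pair-digraph H⁺: from (u,v) to (u',v) when u,v have the same color,
uu' is an edge and vu' is a non-edge; from (u,v) to (u,v') when u,v have different
colors, vv' is an edge and uv is a non-edge.  Vertices of H⁺ are pairs of distinct
vertices of H. -/
def PDArc (G : SimpleGraph V) (c : V → Bool) (p q : V × V) : Prop :=
  p.1 ≠ p.2 ∧ q.1 ≠ q.2 ∧
    ((c p.1 = c p.2 ∧ q.2 = p.2 ∧ G.Adj p.1 q.1 ∧ ¬ G.Adj p.2 q.1) ∨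
     (c p.1 ≠ c p.2 ∧ q.1 = p.1 ∧ G.Adj p.2 q.2 ∧ ¬ G.Adj p.1 p.2))

/-- Reachability by directed paths in the pair-digraph. -/
def PDReach (G : SimpleGraph V) (c : V → Bool) : V × V → V × V → Prop :=
  Relation.ReflTransGen (PDArc G c)

/-- `S` is a strongly connected component of the pair-digraph. -/
def PDSCC (G : SimpleGraph V) (c : V → Bool) (S : Set (V × V)) : Prop :=
  S.Nonempty ∧ ∀ p ∈ S, ∀ q, q ∈ S ↔ (PDReach G c p q ∧ PDReach G c q p)

/-- A non-trivial strongly connected component (more than one vertex). -/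
def PDSCCNontriv (G : SimpleGraph V) (c : V → Bool) (S : Set (V × V)) : Prop :=
  PDSCC G c S ∧ ∃ p ∈ S, ∃ q ∈ S, p ≠ q

/-- The coupled set S' = {(u,v) : (v,u) ∈ S}. -/
def PDCoupled (S : Set (V × V)) : Set (V × V) := {p | (p.2, p.1) ∈ S}

/-- A linear ordering avoids the forbidden patterns: there are no a < b < x with
a, b in the same color class, x in the opposite one, ax an edge and bx a non-edge. -/
def GoodOrder (G : SimpleGraph V) (c : V → Bool) (r : LinearOrder V) : Prop :=
  ∀ a b x : V, r.lt a b → r.lt b x → c a = c b → c a ≠ c x → G.Adj a x → G.Adj b x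

/-- `ab` and `xy` are independent edges: the four vertices are distinct and induce
exactly the two edges `ab` and `xy`. -/
def IndepEdges (G : SimpleGraph V) (a b x y : V) : Prop :=
  a ≠ b ∧ a ≠ x ∧ a ≠ y ∧ b ≠ x ∧ b ≠ y ∧ x ≠ y ∧
    G.Adj a b ∧ G.Adj x y ∧ ¬ G.Adj a x ∧ ¬ G.Adj a y ∧ ¬ G.Adj b x ∧ ¬ G.Adj b y

/-- `q` lies on a directed cycle of the pair-digraph. -/
def PDOnCycle (G : SimpleGraph V) (c : V → Bool) (q : V × V) : Prop :=
  ∃ r, PDArc G c q r ∧ PDReach G c r q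

lemma bool_eq_of_ne {a b d : Bool} (h1 : a ≠ d) (h2 : b ≠ d) : a = b := by
  cases a <;> cases b <;> cases d <;> simp_all

lemma pdarc_irrefl (G : SimpleGraph V) (c : V → Bool) (p : V × V) :
    ¬ PDArc G c p p := by
  rintro ⟨h12, -, ⟨-, -, hadj, -⟩ | ⟨-, -, hadj, -⟩⟩
  · exact G.irrefl hadj
  · exact G.irrefl hadj

lemma exists_in_arc {G : SimpleGraph V} {c : V → Bool} {q : V × V}
    (hq : PDOnCycle G c q) : ∃ s, PDArc G c s q := by
  obtain ⟨t, hat, htq⟩ := hq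
  rcases htq.cases_tail with rfl | ⟨s, -, ha⟩
  · exact absurd hat (pdarc_irrefl G c q)
  · exact ⟨s, ha⟩

/-- Key reversal lemma: an arc into an on-cycle vertex, whose source has an
in-arc, can be reversed by a directed path. -/
lemma arc_rev {G : SimpleGraph V} {c : V → Bool}
    (hbip : ∀ x y : V, G.Adj x y → c x ≠ c y) {r q : V × V}
    (a : PDArc G c r q) (hq : PDOnCycle G c q) (hin : ∃ s, PDArc G c s r) :
    PDReach G c q r := by
  obtain ⟨hr12, hq12, hcase⟩ := a
  rcases hcase with ⟨hsame, hq2, hadj, hnadj⟩ | ⟨hdiff, hq1, hadj2, hnadj2⟩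
  · -- type-1 arc r = (u0,v) → q = (u,v); q is an oppositely-colored pair
    obtain ⟨u0, rv⟩ := r
    obtain ⟨u, v⟩ := q
    simp only at hsame hq2 hadj hnadj hr12 hq12
    subst hq2
    -- context: hsame : c u0 = c v, hadj : Adj u0 u, hnadj : ¬ Adj v u
    have hcu : c u ≠ c u0 := fun h => hbip _ _ hadj h.symm
    have hcuv : c u ≠ c v := fun h => hcu (h.trans hsame.symm)
    -- the in-arc to r must be of type 2
    obtain ⟨s, hs⟩ := hin
    have hs' := hs
    obtain ⟨s1, v0⟩ := s
    obtain ⟨hs12, -, hscase⟩ := hs'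
    rcases hscase with ⟨hs_same, hs2, hs_adj, -⟩ | ⟨-, hs1, hs_adj, hs_nadj⟩
    · -- type-1 in-arc into a same-colored pair: impossible
      exfalso
      simp only at hs_same hs2 hs_adj
      subst hs2
      exact hbip _ _ hs_adj (hs_same.trans hsame.symm)
    · simp only at hs1 hs_adj hs_nadj hs12
      subst hs1
      -- context: hs_adj : Adj v0 v, hs_nadj : ¬ Adj u0 v0, hs12 : u0 ≠ v0
      have hcv0 : c v0 ≠ c v := hbip _ _ hs_adj
      have huv0 : u ≠ v0 := fun h => hnadj (h ▸ hs_adj).symm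
      -- chain: (u,v) → (u,v0) → (u0,v0) = s → (u0,v) = r
      have hB1 : PDArc G c (u, v) (u, v0) :=
        ⟨hq12, huv0, Or.inr ⟨hcuv, rfl, hs_adj.symm, fun h => hnadj h.symm⟩⟩
      have hB2 : PDArc G c (u, v0) (u0, v0) :=
        ⟨huv0, hs12, Or.inl ⟨bool_eq_of_ne hcuv hcv0, rfl, hadj.symm,
          fun h => hs_nadj h.symm⟩⟩
      exact Relation.ReflTransGen.head hB1
        (Relation.ReflTransGen.head hB2 (Relation.ReflTransGen.single hs))
  · -- type-2 arc r = (u,v0) → q = (u,v); q is a same-colored pair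
    obtain ⟨ru, v0⟩ := r
    obtain ⟨u, v⟩ := q
    simp only at hdiff hq1 hadj2 hnadj2 hr12 hq12
    subst hq1
    -- context: hdiff : c u ≠ c v0, hadj2 : Adj v0 v, hnadj2 : ¬ Adj u v0
    have hcv : c v ≠ c v0 := fun h => hbip _ _ hadj2 h.symm
    have hcuv : c u = c v := bool_eq_of_ne hdiff hcv
    -- q has an out-arc, necessarily of type 1
    obtain ⟨t, hat, -⟩ := hq
    have hat' := hat
    obtain ⟨u2, tv⟩ := t
    obtain ⟨-, ht12, htcase⟩ := hat'
    rcases htcase with ⟨-, ht2, hadjT, hnadjT⟩ | ⟨hd, -, -, -⟩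
    swap
    · exact absurd hcuv hd
    simp only at ht2 hadjT hnadjT ht12
    subst tv
    -- context: hadjT : Adj u u2, hnadjT : ¬ Adj v u2, ht12 : u2 ≠ v
    have hcu2 : c u2 ≠ c u := fun h => hbip _ _ hadjT h.symm
    have hu2v0 : u2 ≠ v0 := fun h => hnadj2 (h ▸ hadjT)
    -- chain: (u,v) → (u2,v) = t → (u2,v0) → (u,v0) = r
    have hA1 : PDArc G c (u2, v) (u2, v0) :=
      ⟨ht12, hu2v0, Or.inr ⟨fun h => hcu2 (h.trans hcuv.symm), rfl, hadj2.symm,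
        fun h => hnadjT h.symm⟩⟩
    have hA2 : PDArc G c (u2, v0) (u, v0) :=
      ⟨hu2v0, hr12, Or.inl ⟨bool_eq_of_ne hcu2 (fun h => hcv (h.trans hcuv).symm),
        rfl, hadjT.symm, fun h => hnadj2 h.symm⟩⟩
    exact Relation.ReflTransGen.head hat
      (Relation.ReflTransGen.head hA1 (Relation.ReflTransGen.single hA2))

/-- Reachability from an on-cycle vertex to an on-cycle vertex can be
reversed. -/
lemma reach_back {G : SimpleGraph V} {c : V → Bool}
    (hbip : ∀ x y : V, G.Adj x y → c x ≠ c y) {p q : V × V}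
    (h : PDReach G c p q) (hp : PDOnCycle G c p) (hq : PDOnCycle G c q) :
    PDReach G c q p := by
  induction h with
  | refl => exact Relation.ReflTransGen.refl
  | @tail b r h₁ a ih =>
    have hin : ∃ s, PDArc G c s b := by
      rcases h₁.cases_tail with rfl | ⟨s, -, ha⟩
      · exact exists_in_arc hp
      · exact ⟨s, ha⟩
    have hqb : PDReach G c r b := arc_rev hbip a hq hin
    have hob : PDOnCycle G c b := ⟨r, a, hqb⟩
    exact hqb.trans (ih hob)

lemma oncycle_of_mem {G : SimpleGraph V} {c : V → Bool} {S : Set (V × V)}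
    (hS : PDSCCNontriv G c S) {p : V × V} (hp : p ∈ S) : PDOnCycle G c p := by
  obtain ⟨⟨hne, hscc⟩, a, ha, b, hb, hab⟩ := hS
  have hx : ∃ x ∈ S, x ≠ p := by
    by_cases h : a = p
    · exact ⟨b, hb, fun hbp => hab (h.trans hbp.symm)⟩
    · exact ⟨a, ha, h⟩
  obtain ⟨x, hx, hxp⟩ := hx
  have h1 := (hscc p hp x).mp hx
  rcases h1.1.cases_head with rfl | ⟨t, hat, htx⟩
  · exact absurd rfl hxp
  · exact ⟨t, hat, htx.trans h1.2⟩

/-- There is no directed path in H⁺ from one non-trivial strongly connected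
component to a different non-trivial strongly connected component. -/
theorem stmt13 (G : SimpleGraph V) (c : V → Bool)
    (hbip : ∀ x y : V, G.Adj x y → c x ≠ c y)
    (S T : Set (V × V)) (hS : PDSCCNontriv G c S) (hT : PDSCCNontriv G c T)
    (hST : S ≠ T) (p q : V × V) (hp : p ∈ S) (hq : q ∈ T) :
    ¬ PDReach G c p q := by
  intro h
  have hop : PDOnCycle G c p := oncycle_of_mem hS hp
  have hoq : PDOnCycle G c q := oncycle_of_mem hT hq
  have hqp : PDReach G c q p := reach_back hbip h hop hoq
  have hqS : q ∈ S := (hS.1.2 p hp q).mpr ⟨h, hqp⟩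
  exact hST (Set.ext fun r => (hS.1.2 q hqS r).trans ((hT.1.2 q hq r)).symm)
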